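/- The paperfolding word w (the Toeplitz word with pattern 0?1?) satisfies |pref_{4^k − 1}(w)|₀ = 4^k/2 and |pref_{4^k − 1}(w)|₁ = 4^k/2 − 1 for all k ≥ 1; consequently w is weakly abelian periodic along the line y = −1 (its graphic with v₀ = (1,−1), v₁ = (1,1) equals −1 at infinitely many points). -/

import Mathlib

open Filter Topology

/-- Number of 1's among the first `n` letters `w 1, …, w n` of the (1-indexed)
infinite binary word `w`. -/
def onesP (w : ℕ → Bool) (n : ℕ) : ℕ :=
  ((Finset.range n).filter (fun i => w (i + 1) = true)).card

/-- `w` (1-indexed) is the paperfolding word, i.e. the Toeplitz word with pattern `0?1?`: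
positions `≡ 1 (mod 4)` carry `0`, positions `≡ 3 (mod 4)` carry `1`, and the
subsequence of remaining (even) positions is again the word itself. -/
def IsPaperfolding (w : ℕ → Bool) : Prop :=
  (∀ m : ℕ, w (4 * m + 1) = false) ∧ (∀ m : ℕ, w (4 * m + 3) = true) ∧
    (∀ m : ℕ, 1 ≤ m → w (2 * m) = w m)

lemma onesP_succ (w : ℕ → Bool) (n : ℕ) :
    onesP w (n + 1) = onesP w n + (if w (n + 1) = true then 1 else 0) := by
  unfold onesP
  rw [Finset.range_add_one, Finset.filter_insert]
  split
  · rw [Finset.card_insert_of_notMem (by simp)]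
  · simp

lemma w_odd (w : ℕ → Bool) (hw : IsPaperfolding w) (n : ℕ) :
    w (2 * n + 1) = decide (n % 2 = 1) := by
  rcases Nat.even_or_odd n with ⟨m, rfl⟩ | ⟨m, rfl⟩
  · have h := hw.1 m
    rw [show 2 * (m + m) + 1 = 4 * m + 1 by ring, h]
    simp [Nat.add_mul_mod_self_left]
    omega
  · have h := hw.2.1 m
    rw [show 2 * (2 * m + 1) + 1 = 4 * m + 3 by ring, h]
    simp

lemma onesP_double (w : ℕ → Bool) (hw : IsPaperfolding w) :
    ∀ n, onesP w (2 * n) = onesP w n + n / 2 := by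
  intro n
  induction n with
  | zero => simp [onesP]
  | succ n ih =>
    have h2 : w (2 * n + 1 + 1) = w (n + 1) := by
      have := hw.2.2 (n + 1) (by omega)
      rw [show 2 * n + 1 + 1 = 2 * (n + 1) by ring]
      exact this
    rw [show 2 * (n + 1) = (2 * n + 1) + 1 by ring, onesP_succ, onesP_succ, ih,
      w_odd w hw n, onesP_succ, h2]
    rcases Nat.even_or_odd n with h | h <;> [skip; skip] <;>
      · split_ifs <;> simp_all <;> omega

lemma onesP_odd (w : ℕ → Bool) (hw : IsPaperfolding w) (n : ℕ) :
    onesP w (2 * n + 1) = onesP w n + n / 2 + n % 2 := by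
  rw [onesP_succ, onesP_double w hw, w_odd w hw]
  split_ifs with h <;> simp_all

lemma onesP_h (w : ℕ → Bool) (hw : IsPaperfolding w) :
    ∀ k, onesP w (2 * 4 ^ k - 1) = 4 ^ k - 1 := by
  intro k
  induction k with
  | zero =>
    simp only [pow_zero]
    rw [show 2 * 1 - 1 = 0 + 1 by rfl, onesP_succ]
    have := hw.1 0
    simp_all [onesP]
  | succ k ih =>
    have h4 : 1 ≤ 4 ^ k := Nat.one_le_pow _ _ (by norm_num)
    have hp : 4 ^ (k + 1) = 4 * 4 ^ k := by rw [pow_succ]; ring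
    rw [show 2 * 4 ^ (k + 1) - 1 = 2 * (2 * (2 * 4 ^ k - 1) + 1) + 1 by omega,
      onesP_odd w hw, onesP_odd w hw, ih]
    omega

lemma onesP_g (w : ℕ → Bool) (hw : IsPaperfolding w) (k : ℕ) :
    onesP w (4 ^ (k + 1) - 1) = 2 * 4 ^ k - 1 := by
  have h4 : 1 ≤ 4 ^ k := Nat.one_le_pow _ _ (by norm_num)
  have hp : 4 ^ (k + 1) = 4 * 4 ^ k := by rw [pow_succ]; ring
  rw [show 4 ^ (k + 1) - 1 = 2 * (2 * 4 ^ k - 1) + 1 by omega,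
    onesP_odd w hw, onesP_h w hw]
  omega

/-- For the paperfolding word, `|pref_{4^k-1}(w)|₀ = 4^k/2` and
`|pref_{4^k-1}(w)|₁ = 4^k/2 - 1` for all `k ≥ 1`; consequently its graphic
(with `v₀ = (1,-1)`, `v₁ = (1,1)`) equals `-1` at infinitely many points,
i.e. `w` is WAP along the line `y = -1`. -/
theorem paperfolding_prefix_counts (w : ℕ → Bool) (hw : IsPaperfolding w) :
    (∀ k : ℕ, 1 ≤ k →
      (4 ^ k - 1) - onesP w (4 ^ k - 1) = 4 ^ k / 2 ∧
      onesP w (4 ^ k - 1) = 4 ^ k / 2 - 1) ∧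
    (∀ N : ℕ, ∃ n : ℕ, N ≤ n ∧
      (onesP w n : ℤ) - ((n - onesP w n : ℕ) : ℤ) = -1) := by
  constructor
  · intro k hk
    obtain ⟨j, rfl⟩ : ∃ j, k = j + 1 := ⟨k - 1, by omega⟩
    have h4 : 1 ≤ 4 ^ j := Nat.one_le_pow _ _ (by norm_num)
    have hp : 4 ^ (j + 1) = 4 * 4 ^ j := by rw [pow_succ]; ring
    rw [onesP_g w hw]
    omega
  · intro N
    refine ⟨4 ^ (N + 1) - 1, ?_, ?_⟩
    · have : N + 1 < 4 ^ (N + 1) := Nat.lt_pow_self (by norm_num)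
      omega
    · have h4 : 1 ≤ 4 ^ N := Nat.one_le_pow _ _ (by norm_num)
      have hp : 4 ^ (N + 1) = 4 * 4 ^ N := by rw [pow_succ]; ring
      rw [onesP_g w hw]
      omega
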